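/- Let α = (9−√5)/38. For all real numbers μ, a01, b01, c010, c011, c001, c101, c0101, c0110: if the matrix M2(μ, a01, b01, c010, c011, c001, c101, c0101, c0110) is positive semidefinite, then a01 = 0, b01 = 0, c011 = 0, c101 = 0, c0101 = 0, and c010 = μ/2, c001 = μ/2, c0110 = μ/2. -/

import Mathlib

noncomputable def α : ℝ := (9 - Real.sqrt 5) / 38

noncomputable def M2 (μ a01 b01 c010 c011 c001 c101 c0101 c0110 : ℝ) :
    Matrix (Fin 9) (Fin 9) ℝ :=
  !![1, μ/2+α*(1-μ), μ/2+2*α*(1-μ), μ/2+α*(1-μ), μ/2+2*α*(1-μ), μ/2, μ/2+α*(1-μ), μ/2+α*(1-μ), 0;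
     μ/2+α*(1-μ), μ/2+α*(1-μ), a01, μ/2, μ/2+α*(1-μ), μ/2, μ/2+α*(1-μ), c010, c011;
     μ/2+2*α*(1-μ), a01, μ/2+2*α*(1-μ), μ/2+α*(1-μ), 0, c010, c011, μ/2+α*(1-μ), 0;
     μ/2+α*(1-μ), μ/2, μ/2+α*(1-μ), μ/2+α*(1-μ), b01, μ/2, c001, μ/2+α*(1-μ), c101;
     μ/2+2*α*(1-μ), μ/2+α*(1-μ), 0, b01, μ/2+2*α*(1-μ), c001, μ/2+α*(1-μ), c101, 0;
     μ/2, μ/2, c010, μ/2, c001, μ/2, c001, c010, c0101;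
     μ/2+α*(1-μ), μ/2+α*(1-μ), c011, c001, μ/2+α*(1-μ), c001, μ/2+α*(1-μ), c0110, c011;
     μ/2+α*(1-μ), c010, μ/2+α*(1-μ), μ/2+α*(1-μ), c101, c010, c0110, μ/2+α*(1-μ), c101;
     0, c011, 0, c101, 0, c0101, c011, c101, 0]

lemma quad_key {a b : ℝ} (ha : 0 ≤ a) (h : ∀ t : ℝ, 0 ≤ a * t ^ 2 + b * t) : b = 0 := by
  have hu : (0:ℝ) < a + 1 := by linarith
  have h1 := h (-b / (a + 1))
  have h2 : a * (-b / (a + 1)) ^ 2 + b * (-b / (a + 1)) = -(b ^ 2 / (a + 1) ^ 2) := by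
    field_simp
    ring
  rw [h2] at h1
  have h3 : b ^ 2 / (a + 1) ^ 2 ≤ 0 := by linarith
  have h4 : 0 ≤ b ^ 2 / (a + 1) ^ 2 := by positivity
  have h5 : b ^ 2 / (a + 1) ^ 2 = 0 := le_antisymm h3 h4
  have h6 : b ^ 2 = 0 := by
    rcases div_eq_zero_iff.mp h5 with h | h
    · exact h
    · exact absurd h (by positivity)
  exact pow_eq_zero_iff (by norm_num) |>.mp h6

theorem stmt8 (μ a01 b01 c010 c011 c001 c101 c0101 c0110 : ℝ)
    (h : (M2 μ a01 b01 c010 c011 c001 c101 c0101 c0110).PosSemidef) :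
    a01 = 0 ∧ b01 = 0 ∧ c011 = 0 ∧ c101 = 0 ∧ c0101 = 0 ∧
      c010 = μ / 2 ∧ c001 = μ / 2 ∧ c0110 = μ / 2 := by
  have hd1 : 0 ≤ μ/2 + α*(1-μ) := by
    have h1 := h.dotProduct_mulVec_nonneg ![0,1,0,0,0,0,0,0,0]
    simp [M2, Matrix.mulVec, dotProduct, Fin.sum_univ_succ] at h1
    linarith
  have hd2 : 0 ≤ μ/2 + 2*α*(1-μ) := by
    have h1 := h.dotProduct_mulVec_nonneg ![0,0,1,0,0,0,0,0,0]
    simp [M2, Matrix.mulVec, dotProduct, Fin.sum_univ_succ] at h1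
    linarith
  have hd5 : 0 ≤ μ/2 := by
    have h1 := h.dotProduct_mulVec_nonneg ![0,0,0,0,0,1,0,0,0]
    simp [M2, Matrix.mulVec, dotProduct, Fin.sum_univ_succ] at h1
    linarith
  have hc011 : 2 * c011 = 0 := by
    apply quad_key hd1
    intro t
    have h1 := h.dotProduct_mulVec_nonneg ![0,t,0,0,0,0,0,0,1]
    simp [M2, Matrix.mulVec, dotProduct, Fin.sum_univ_succ] at h1
    ring_nf at h1 ⊢
    linarith
  have hc101 : 2 * c101 = 0 := by
    apply quad_key hd1
    intro t
    have h1 := h.dotProduct_mulVec_nonneg ![0,0,0,t,0,0,0,0,1]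
    simp [M2, Matrix.mulVec, dotProduct, Fin.sum_univ_succ] at h1
    ring_nf at h1 ⊢
    linarith
  have hc0101 : 2 * c0101 = 0 := by
    apply quad_key hd5
    intro t
    have h1 := h.dotProduct_mulVec_nonneg ![0,0,0,0,0,t,0,0,1]
    simp [M2, Matrix.mulVec, dotProduct, Fin.sum_univ_succ] at h1
    ring_nf at h1 ⊢
    linarith
  have hc010 : μ - 2 * c010 = 0 := by
    apply quad_key hd1
    intro t
    have h1 := h.dotProduct_mulVec_nonneg ![0,t,0,1,0,0,0,-1,0]
    simp [M2, Matrix.mulVec, dotProduct, Fin.sum_univ_succ] at h1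
    ring_nf at h1 ⊢
    linarith
  have hc001 : μ - 2 * c001 = 0 := by
    apply quad_key hd1
    intro t
    have h1 := h.dotProduct_mulVec_nonneg ![0,1,0,t,0,0,-1,0,0]
    simp [M2, Matrix.mulVec, dotProduct, Fin.sum_univ_succ] at h1
    ring_nf at h1 ⊢
    linarith
  have hc0110 : 2 * c010 - 2 * c0110 = 0 := by
    apply quad_key hd1
    intro t
    have h1 := h.dotProduct_mulVec_nonneg ![0,1,0,0,0,0,-1,t,0]
    simp [M2, Matrix.mulVec, dotProduct, Fin.sum_univ_succ] at h1
    ring_nf at h1 ⊢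
    linarith
  have ha01 : 2 * a01 - 2 * c011 = 0 := by
    apply quad_key hd2
    intro t
    have h1 := h.dotProduct_mulVec_nonneg ![0,1,t,0,0,0,-1,0,0]
    simp [M2, Matrix.mulVec, dotProduct, Fin.sum_univ_succ] at h1
    ring_nf at h1 ⊢
    linarith
  have hb01 : 2 * b01 - 2 * c101 = 0 := by
    apply quad_key hd2
    intro t
    have h1 := h.dotProduct_mulVec_nonneg ![0,0,0,1,t,0,0,-1,0]
    simp [M2, Matrix.mulVec, dotProduct, Fin.sum_univ_succ] at h1
    ring_nf at h1 ⊢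
    linarith
  refine ⟨by linarith, by linarith, by linarith, by linarith, by linarith,
    by linarith, by linarith, by linarith⟩
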